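/- arXiv:1511.01195 — 3 statements merged into one kernel-verified Lean document; each statement's English description precedes it below -/
import Mathlib

section
/- Let (M, d) be a compact metric space and μ a finite Borel measure on M with μ(M) > 0. Let G be a group of isometries of (M, d), each of which preserves μ, and assume G acts transitively on M. Let m ≥ 1 and let e_1, …, e_m : M → ℂ be continuous functions that are orthonormal in L²(μ), and whose span E is G-invariant. Then for every x ∈ M one has ∑_{i=1}^m |e_i(x)|² = m / μ(M). -/
open MeasureTheory Matrix

/-- On a compact metric space with a finite Borel measure preserved by a
transitively acting group of isometries, if `e 1, …, e m` are continuous functions, orthonormal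
in `L²(μ)`, spanning a `G`-invariant space, then `∑ i, |e i x|² = m / μ(M)` for every `x`. -/
theorem sum_sq_eigenbasis_const {M : Type*} [MetricSpace M] [CompactSpace M]
    [MeasurableSpace M] [BorelSpace M]
    (μ : Measure M) [IsFiniteMeasure μ] (hμpos : 0 < μ Set.univ)
    (G : Subgroup (M ≃ᵢ M))
    (hGmp : ∀ g ∈ G, MeasurePreserving (g : M → M) μ μ)
    (hGtrans : ∀ x y : M, ∃ g ∈ G, g x = y)
    (m : ℕ) (hm : 1 ≤ m) (e : Fin m → M → ℂ)
    (he_cont : ∀ i, Continuous (e i))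
    (he_orth : ∀ i j, ∫ x, e i x * (starRingEnd ℂ) (e j x) ∂μ = if i = j then 1 else 0)
    (he_inv : ∀ g ∈ G, ∀ i, (fun x => e i (g x)) ∈ Submodule.span ℂ (Set.range e)) :
    ∀ x : M, ∑ i, ‖e i x‖ ^ 2 = m / (μ Set.univ).toReal := by
  have hintC : ∀ f : M → ℂ, Continuous f → Integrable f μ := fun f hf =>
    hf.integrable_of_hasCompactSupport (HasCompactSupport.of_compactSpace f)
  have hintR : ∀ f : M → ℝ, Continuous f → Integrable f μ := fun f hf =>
    hf.integrable_of_hasCompactSupport (HasCompactSupport.of_compactSpace f)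
  -- Key invariance: the complex-valued diagonal sum is invariant under `G`.
  have keyC : ∀ g ∈ G, ∀ x : M,
      ∑ i, e i (g x) * (starRingEnd ℂ) (e i (g x))
        = ∑ i, e i x * (starRingEnd ℂ) (e i x) := by
    intro g hg x
    choose A hA using fun i => (Submodule.mem_span_range_iff_exists_fun ℂ).mp (he_inv g hg i)
    have hpt : ∀ i (y : M), e i (g y) = ∑ j, A i j * e j y := by
      intro i y
      have := congrFun (hA i) y
      simpa [Finset.sum_apply, Pi.smul_apply, smul_eq_mul] using this.symm
    -- expand the product pointwise
    have expand : ∀ (i j : Fin m) (y : M),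
        e i (g y) * (starRingEnd ℂ) (e j (g y))
          = ∑ k, ∑ l, (A i k * (starRingEnd ℂ) (A j l)) * (e k y * (starRingEnd ℂ) (e l y)) := by
      intro i j y
      rw [hpt i y, hpt j y, map_sum, Finset.sum_mul_sum]
      refine Finset.sum_congr rfl fun k _ => Finset.sum_congr rfl fun l _ => ?_
      rw [RingHom.map_mul]; ring
    -- unitarity of A
    have hU : ∀ i j, ∑ k, A i k * (starRingEnd ℂ) (A j k) = if i = j then 1 else 0 := by
      intro i j
      have hcomp : ∫ y, e i (g y) * (starRingEnd ℂ) (e j (g y)) ∂μ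
          = if i = j then 1 else 0 := by
        rw [MeasurePreserving.integral_comp (hGmp g hg)
          (g : M ≃ᵢ M).toHomeomorph.measurableEmbedding
          (fun y => e i y * (starRingEnd ℂ) (e j y))]
        exact he_orth i j
      have hterm : ∀ k l : Fin m,
          Integrable (fun y => (A i k * (starRingEnd ℂ) (A j l)) * (e k y * (starRingEnd ℂ) (e l y))) μ := by
        intro k l
        exact (hintC _ (((he_cont k).mul ((Complex.continuous_conj).comp (he_cont l))))).const_mul _
      calc ∑ k, A i k * (starRingEnd ℂ) (A j k)
          = ∑ k, ∑ l, (A i k * (starRingEnd ℂ) (A j l))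
              * (∫ y, e k y * (starRingEnd ℂ) (e l y) ∂μ) := by
            refine (Finset.sum_congr rfl fun k _ => ?_).symm
            rw [Finset.sum_eq_single k]
            · rw [he_orth k k]; simp
            · intro l _ hlk; rw [he_orth k l, if_neg (Ne.symm hlk), mul_zero]
            · simp
        _ = ∑ k, ∑ l, ∫ y, (A i k * (starRingEnd ℂ) (A j l))
              * (e k y * (starRingEnd ℂ) (e l y)) ∂μ := by
            refine Finset.sum_congr rfl fun k _ => Finset.sum_congr rfl fun l _ => ?_
            rw [integral_const_mul]
        _ = ∫ y, ∑ k, ∑ l, (A i k * (starRingEnd ℂ) (A j l))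
              * (e k y * (starRingEnd ℂ) (e l y)) ∂μ := by
            rw [integral_finset_sum _ fun k _ => integrable_finset_sum _ fun l _ => hterm k l]
            exact Finset.sum_congr rfl fun k _ =>
              (integral_finset_sum _ fun l _ => hterm k l).symm
        _ = ∫ y, e i (g y) * (starRingEnd ℂ) (e j (g y)) ∂μ := by
            refine integral_congr_ae (Filter.Eventually.of_forall fun y => ?_)
            exact (expand i j y).symm
        _ = if i = j then 1 else 0 := hcomp
    -- from A Aᴴ = 1 deduce Aᴴ A = 1
    set B : Matrix (Fin m) (Fin m) ℂ := Matrix.of A with hB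
    have hBBH : B * Bᴴ = 1 := by
      ext i j
      simp only [Matrix.mul_apply, Matrix.conjTranspose_apply, Matrix.one_apply, hB,
        Matrix.of_apply, Matrix.star_apply]
      simpa using hU i j
    have hBHB : Bᴴ * B = 1 := mul_eq_one_comm.mp hBBH
    have hU2 : ∀ j k : Fin m, ∑ i, A i j * (starRingEnd ℂ) (A i k)
        = if j = k then 1 else 0 := by
      intro j k
      have h1 : ∑ i, (starRingEnd ℂ) (A i j) * A i k = if j = k then 1 else 0 := by
        have := congrFun (congrFun hBHB j) k
        simpa [Matrix.mul_apply, Matrix.conjTranspose_apply, Matrix.one_apply, hB,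
          Matrix.of_apply, Matrix.star_apply] using this
      calc ∑ i, A i j * (starRingEnd ℂ) (A i k)
          = (starRingEnd ℂ) (∑ i, (starRingEnd ℂ) (A i j) * A i k) := by
            rw [map_sum]
            exact Finset.sum_congr rfl fun i _ => by
              rw [RingHom.map_mul, Complex.conj_conj]
        _ = if j = k then 1 else 0 := by rw [h1]; split <;> simp
    calc ∑ i, e i (g x) * (starRingEnd ℂ) (e i (g x))
        = ∑ i, ∑ j, ∑ k, (A i j * (starRingEnd ℂ) (A i k))
            * (e j x * (starRingEnd ℂ) (e k x)) := by
          exact Finset.sum_congr rfl fun i _ => expand i i x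
      _ = ∑ j, ∑ k, (∑ i, A i j * (starRingEnd ℂ) (A i k))
            * (e j x * (starRingEnd ℂ) (e k x)) := by
          rw [Finset.sum_comm]
          refine Finset.sum_congr rfl fun j _ => ?_
          rw [Finset.sum_comm]
          refine Finset.sum_congr rfl fun k _ => ?_
          rw [Finset.sum_mul]
      _ = ∑ j, e j x * (starRingEnd ℂ) (e j x) := by
          refine Finset.sum_congr rfl fun j _ => ?_
          rw [Finset.sum_eq_single j]
          · rw [hU2 j j]; simp
          · intro k _ hkj; rw [hU2 j k, if_neg (Ne.symm hkj), zero_mul]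
          · simp
  -- the real-valued sum is constant
  have hmulconj : ∀ (z : ℂ), z * (starRingEnd ℂ) z = ((‖z‖ ^ 2 : ℝ) : ℂ) := by
    intro z
    rw [Complex.mul_conj]
    norm_cast
    rw [Complex.sq_norm]
  have keyR : ∀ g ∈ G, ∀ x : M, ∑ i, ‖e i (g x)‖ ^ 2 = ∑ i, ‖e i x‖ ^ 2 := by
    intro g hg x
    have := keyC g hg x
    simp only [hmulconj] at this
    exact_mod_cast (by push_cast at this ⊢; exact this : ((∑ i, ‖e i (g x)‖ ^ 2 : ℝ) : ℂ)
      = ((∑ i, ‖e i x‖ ^ 2 : ℝ) : ℂ))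
  intro x
  have hconst : ∀ y : M, ∑ i, ‖e i y‖ ^ 2 = ∑ i, ‖e i x‖ ^ 2 := by
    intro y
    obtain ⟨g, hg, hgx⟩ := hGtrans x y
    rw [← hgx]
    exact keyR g hg x
  -- integral of each |e i|² is 1
  have hone : ∀ i, ∫ y, ‖e i y‖ ^ 2 ∂μ = 1 := by
    intro i
    have h1 : ∫ y, e i y * (starRingEnd ℂ) (e i y) ∂μ = 1 := by
      rw [he_orth i i]; simp
    have h2 : ∫ y, ((‖e i y‖ ^ 2 : ℝ) : ℂ) ∂μ = 1 := by
      rw [← h1]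
      exact integral_congr_ae (Filter.Eventually.of_forall fun y => (hmulconj _).symm)
    have h3 : ∫ y, ((‖e i y‖ ^ 2 : ℝ) : ℂ) ∂μ = ((∫ y, ‖e i y‖ ^ 2 ∂μ : ℝ) : ℂ) :=
      integral_ofReal
    rw [h3] at h2
    exact_mod_cast h2
  -- integrate the constant
  have hsum : ∫ y, (∑ i, ‖e i y‖ ^ 2) ∂μ = (m : ℝ) := by
    rw [integral_finset_sum _ fun i _ => hintR (fun y => ‖e i y‖ ^ 2) ((he_cont i).norm.pow 2)]
    rw [Finset.sum_congr rfl fun i _ => hone i]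
    simp
  have hsum2 : ∫ y, (∑ i, ‖e i y‖ ^ 2) ∂μ = (μ Set.univ).toReal * ∑ i, ‖e i x‖ ^ 2 := by
    rw [integral_congr_ae (Filter.Eventually.of_forall hconst), integral_const]
    simp [smul_eq_mul, Measure.real]
  have htoReal : (μ Set.univ).toReal ≠ 0 :=
    (ENNReal.toReal_pos hμpos.ne' (measure_ne_top μ _)).ne'
  rw [hsum] at hsum2
  rw [eq_div_iff htoReal, mul_comm]
  exact hsum2.symm
end

section
/- Let (M, d) be a compact metric space and μ a finite Borel measure on M with μ(M) > 0. Let G be a group of isometries of (M, d), each of which preserves μ, and assume G acts transitively on M. Let m ≥ 1 and let e_1, …, e_m : M → ℂ be continuous functions that are orthonormal in L²(μ), and whose span E is G-invariant. Then for every choice of coefficients c_1, …, c_m ∈ ℂ and every x ∈ M, the function u = ∑_{i=1}^m c_i e_i satisfies |u(x)| ≤ (m / μ(M))^{1/2} · (∑_{i=1}^m |c_i|²)^{1/2}; equivalently ‖u‖_{L^∞} ≤ (m/μ(M))^{1/2} ‖u‖_{L²(μ)}. -/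
open MeasureTheory

/-- Sup-norm bound for functions in an isometry-invariant orthonormal family:
`|∑ i, c i • e i x| ≤ √(m/μ(M)) · √(∑ |c i|²)`. -/
theorem sup_norm_bound_eigenspace {M : Type*} [MetricSpace M] [CompactSpace M]
    [MeasurableSpace M] [BorelSpace M]
    (μ : Measure M) [IsFiniteMeasure μ] (hμpos : 0 < μ Set.univ)
    (G : Subgroup (M ≃ᵢ M))
    (hGmp : ∀ g ∈ G, MeasurePreserving (g : M → M) μ μ)
    (hGtrans : ∀ x y : M, ∃ g ∈ G, g x = y)
    (m : ℕ) (hm : 1 ≤ m) (e : Fin m → M → ℂ)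
    (he_cont : ∀ i, Continuous (e i))
    (he_orth : ∀ i j, ∫ x, e i x * (starRingEnd ℂ) (e j x) ∂μ = if i = j then 1 else 0)
    (he_inv : ∀ g ∈ G, ∀ i, (fun x => e i (g x)) ∈ Submodule.span ℂ (Set.range e)) :
    ∀ (c : Fin m → ℂ) (x : M),
      ‖∑ i, c i * e i x‖ ≤
        Real.sqrt (m / (μ Set.univ).toReal) * Real.sqrt (∑ i, ‖c i‖ ^ 2) := by
  classical
  intro c x
  have hint : ∀ (f : M → ℂ), Continuous f → Integrable f μ := fun f hf =>
    integrableOn_univ.mp (hf.locallyIntegrable.integrableOn_isCompact isCompact_univ)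
  -- invariance of Φ(y) = ∑ i, e i y * conj (e i y)
  have hinv : ∀ g ∈ G, ∀ y : M,
      (∑ i, e i (g y) * (starRingEnd ℂ) (e i (g y)))
        = ∑ i, e i y * (starRingEnd ℂ) (e i y) := by
    intro g hg y
    choose A hA using fun i => (Submodule.mem_span_range_iff_exists_fun ℂ).mp (he_inv g hg i)
    have hpt : ∀ i (z : M), e i (g z) = ∑ j, A i j * e j z := by
      intro i z
      have := congrFun (hA i) z
      simpa [Finset.sum_apply, smul_eq_mul] using this.symm
    have hexp : ∀ i j (z : M), e i (g z) * (starRingEnd ℂ) (e j (g z))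
        = ∑ k, ∑ l, (A i k * (starRingEnd ℂ) (A j l)) * (e k z * (starRingEnd ℂ) (e l z)) := by
      intro i j z
      rw [hpt i z, hpt j z, map_sum, Finset.sum_mul_sum]
      refine Finset.sum_congr rfl fun k _ => Finset.sum_congr rfl fun l _ => ?_
      rw [map_mul]; ring
    have hcont2 : ∀ (a : ℂ) (k l : Fin m),
        Continuous (fun z => a * (e k z * (starRingEnd ℂ) (e l z))) := by
      intro a k l
      exact continuous_const.mul ((he_cont k).mul (continuous_star.comp (he_cont l)))
    have horth' : ∀ i j, ∫ z, e i (g z) * (starRingEnd ℂ) (e j (g z)) ∂μ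
        = if i = j then 1 else 0 := by
      intro i j
      rw [(hGmp g hg).integral_comp (g : M ≃ᵢ M).toHomeomorph.measurableEmbedding
        (fun z => e i z * (starRingEnd ℂ) (e j z))]
      exact he_orth i j
    have hAA : (Matrix.of A) * (Matrix.of A).conjTranspose = 1 := by
      ext i j
      have hcalc : ((Matrix.of A) * (Matrix.of A).conjTranspose) i j
          = ∫ z, e i (g z) * (starRingEnd ℂ) (e j (g z)) ∂μ := by
        calc ((Matrix.of A) * (Matrix.of A).conjTranspose) i j
            = ∑ k, A i k * (starRingEnd ℂ) (A j k) := by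
              simp [Matrix.mul_apply, Matrix.conjTranspose_apply]
          _ = ∑ k, ∑ l, (A i k * (starRingEnd ℂ) (A j l)) * (if k = l then 1 else 0) := by
              refine Finset.sum_congr rfl fun k _ => ?_
              simp
          _ = ∑ k, ∑ l, (A i k * (starRingEnd ℂ) (A j l))
                * ∫ z, e k z * (starRingEnd ℂ) (e l z) ∂μ := by
              simp_rw [he_orth]
          _ = ∑ k, ∑ l, ∫ z, (A i k * (starRingEnd ℂ) (A j l))
                * (e k z * (starRingEnd ℂ) (e l z)) ∂μ := by
              simp_rw [integral_const_mul]
          _ = ∫ z, ∑ k, ∑ l, (A i k * (starRingEnd ℂ) (A j l))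
                * (e k z * (starRingEnd ℂ) (e l z)) ∂μ := by
              rw [integral_finset_sum _
                (fun k _ => integrable_finset_sum _ fun l _ => hint _ (hcont2 _ k l))]
              refine Finset.sum_congr rfl fun k _ => ?_
              rw [integral_finset_sum _ (fun l _ => hint _ (hcont2 _ k l))]
          _ = ∫ z, e i (g z) * (starRingEnd ℂ) (e j (g z)) ∂μ := by
              refine integral_congr_ae (Filter.Eventually.of_forall fun z => ?_)
              exact (hexp i j z).symm
      rw [hcalc, horth']
      simp [Matrix.one_apply]
    have hAA' : (Matrix.of A).conjTranspose * (Matrix.of A) = 1 := mul_eq_one_comm.mp hAA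
    have hentry : ∀ k l : Fin m, (∑ i, A i k * (starRingEnd ℂ) (A i l))
        = if l = k then 1 else 0 := by
      intro k l
      have h := congrFun (congrFun hAA' l) k
      simpa [Matrix.mul_apply, Matrix.conjTranspose_apply, Matrix.one_apply,
        mul_comm] using h
    calc ∑ i, e i (g y) * (starRingEnd ℂ) (e i (g y))
        = ∑ i, ∑ k, ∑ l, (A i k * (starRingEnd ℂ) (A i l))
            * (e k y * (starRingEnd ℂ) (e l y)) :=
          Finset.sum_congr rfl fun i _ => hexp i i y
      _ = ∑ k, ∑ l, (∑ i, A i k * (starRingEnd ℂ) (A i l))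
            * (e k y * (starRingEnd ℂ) (e l y)) := by
          rw [Finset.sum_comm]
          refine Finset.sum_congr rfl fun k _ => ?_
          rw [Finset.sum_comm]
          refine Finset.sum_congr rfl fun l _ => ?_
          rw [Finset.sum_mul]
      _ = ∑ k, ∑ l, (if l = k then (1 : ℂ) else 0)
            * (e k y * (starRingEnd ℂ) (e l y)) := by
          simp_rw [hentry]
      _ = ∑ k, e k y * (starRingEnd ℂ) (e k y) := by
          refine Finset.sum_congr rfl fun k _ => ?_
          simp
  -- Φ is constant
  have hconst : ∀ y : M, (∑ i, e i y * (starRingEnd ℂ) (e i y))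
      = ∑ i, e i x * (starRingEnd ℂ) (e i x) := by
    intro y
    obtain ⟨g, hg, hgy⟩ := hGtrans y x
    rw [← hgy]
    exact (hinv g hg y).symm
  -- integral of Φ equals m
  have hintΦ : ∫ z, (∑ i, e i z * (starRingEnd ℂ) (e i z)) ∂μ = (m : ℂ) := by
    rw [integral_finset_sum]
    · simp_rw [he_orth]
      simp
    · intro i _
      exact hint _ ((he_cont i).mul (continuous_star.comp (he_cont i)))
  -- but also equals μ(M) • Φ(x)
  have hintΦ' : ∫ z, (∑ i, e i z * (starRingEnd ℂ) (e i z)) ∂μ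
      = (μ Set.univ).toReal • (∑ i, e i x * (starRingEnd ℂ) (e i x)) := by
    rw [show (fun z => ∑ i, e i z * (starRingEnd ℂ) (e i z))
        = fun _ => ∑ i, e i x * (starRingEnd ℂ) (e i x) from funext hconst]
    exact integral_const _
  -- Φ(x) as a real number
  have hΦreal : (∑ i, e i x * (starRingEnd ℂ) (e i x))
      = ((∑ i, ‖e i x‖ ^ 2 : ℝ) : ℂ) := by
    push_cast
    refine Finset.sum_congr rfl fun i _ => ?_
    rw [Complex.mul_conj, Complex.normSq_eq_norm_sq]
    push_cast
    ring
  have hμne : (μ Set.univ).toReal ≠ 0 := by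
    have : 0 < (μ Set.univ).toReal :=
      ENNReal.toReal_pos hμpos.ne' (measure_ne_top μ _)
    exact this.ne'
  have hSeq : (∑ i, ‖e i x‖ ^ 2) = m / (μ Set.univ).toReal := by
    have h := hintΦ'.symm.trans hintΦ
    rw [hΦreal] at h
    have h2 : (((μ Set.univ).toReal * ∑ i, ‖e i x‖ ^ 2 : ℝ) : ℂ) = ((m : ℝ) : ℂ) := by
      push_cast
      rw [← h]
      simp [Complex.real_smul]
    have h3 : (μ Set.univ).toReal * ∑ i, ‖e i x‖ ^ 2 = (m : ℝ) :=
      Complex.ofReal_injective h2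
    rw [eq_div_iff hμne, mul_comm]
    exact h3
  calc ‖∑ i, c i * e i x‖ ≤ ∑ i, ‖c i‖ * ‖e i x‖ := by
        refine (norm_sum_le _ _).trans_eq ?_
        exact Finset.sum_congr rfl fun i _ => norm_mul _ _
    _ ≤ Real.sqrt (∑ i, ‖c i‖ ^ 2) * Real.sqrt (∑ i, ‖e i x‖ ^ 2) :=
        Real.sum_mul_le_sqrt_mul_sqrt _ _ _
    _ = Real.sqrt (m / (μ Set.univ).toReal) * Real.sqrt (∑ i, ‖c i‖ ^ 2) := by
        rw [hSeq, mul_comm]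
end

section
/- Let (M, d) be a compact metric space and μ a finite Borel measure on M with μ(M) > 0. Let G be a group of isometries of (M, d), each of which preserves μ, and assume G acts transitively on M. Let m ≥ 1 and let e_1, …, e_m : M → ℂ be continuous functions that are orthonormal in L²(μ), and whose span E is G-invariant. Let σ be the uniform probability measure on the complex unit sphere S = {z ∈ ℂ^m : |z| = 1}. Then for every Borel set Ω ⊆ M, the expected local L²-mass of a random unit vector of E satisfies ∫_S ( ∫_Ω |∑_{i=1}^m z_i e_i(x)|² dμ(x) ) dσ(z) = μ(Ω)/μ(M). -/
open MeasureTheory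

noncomputable def diagIso {m : ℕ} (c : Fin m → ℂ) (hc : ∀ k, ‖c k‖ = 1) :
    EuclideanSpace ℂ (Fin m) ≃ₗᵢ[ℂ] EuclideanSpace ℂ (Fin m) where
  toFun z := WithLp.toLp 2 (fun k => c k * z k)
  invFun z := WithLp.toLp 2 (fun k => (c k)⁻¹ * z k)
  map_add' z w := by ext k; show c k * (z k + w k) = c k * z k + c k * w k; ring
  map_smul' a z := by ext k; show c k * (a * z k) = a * (c k * z k); ring
  left_inv z := by
    ext k
    have : c k ≠ 0 := by intro h; simpa [h] using hc k
    show (c k)⁻¹ * (c k * z k) = z k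
    field_simp
  right_inv z := by
    ext k
    have : c k ≠ 0 := by intro h; simpa [h] using hc k
    show c k * ((c k)⁻¹ * z k) = z k
    field_simp
  norm_map' z := by
    rw [EuclideanSpace.norm_eq, EuclideanSpace.norm_eq]
    congr 1
    apply Finset.sum_congr rfl
    intro k _
    show ‖c k * z k‖ ^ 2 = ‖z k‖ ^ 2
    rw [norm_mul, hc k, one_mul]

theorem coord_norm_le {m : ℕ} (z : EuclideanSpace ℂ (Fin m)) (k : Fin m) : ‖z k‖ ≤ ‖z‖ := by
  rw [EuclideanSpace.norm_eq]
  calc ‖z k‖ = Real.sqrt (‖z k‖ ^ 2) := by rw [Real.sqrt_sq (norm_nonneg _)]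
    _ ≤ _ := by
        apply Real.sqrt_le_sqrt
        exact Finset.single_le_sum (f := fun k => ‖z k‖ ^ 2)
          (fun _ _ => sq_nonneg _) (Finset.mem_univ k)

theorem coord_continuous {m : ℕ} (k : Fin m) :
    Continuous (fun z : EuclideanSpace ℂ (Fin m) => z k) :=
  (EuclideanSpace.proj (𝕜 := ℂ) k).continuous

theorem moment {m : ℕ} (hm : 1 ≤ m)
    [MeasurableSpace (EuclideanSpace ℂ (Fin m))] [BorelSpace (EuclideanSpace ℂ (Fin m))]
    (σ : Measure (EuclideanSpace ℂ (Fin m))) [IsProbabilityMeasure σ]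
    (hσ_sphere : σ (Metric.sphere 0 1) = 1)
    (hσ_inv : ∀ U : EuclideanSpace ℂ (Fin m) ≃ₗᵢ[ℂ] EuclideanSpace ℂ (Fin m),
      Measure.map U σ = σ) (i j : Fin m) :
    ∫ z, z i * (starRingEnd ℂ) (z j) ∂σ = if i = j then ((m : ℂ))⁻¹ else 0 := by
  have hsph : ∀ᵐ z ∂σ, ‖z‖ = 1 := by
    have hc : σ (Metric.sphere (0 : EuclideanSpace ℂ (Fin m)) 1)ᶜ = 0 := by
      rw [measure_compl Metric.isClosed_sphere.measurableSet (measure_ne_top _ _), hσ_sphere,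
        measure_univ, tsub_self]
    filter_upwards [measure_eq_zero_iff_ae_notMem.mp hc] with z hz
    simpa [Metric.mem_sphere, dist_zero_right] using not_not.mp hz
  -- integrability of coordinate products
  have hint : ∀ a b : Fin m, Integrable (fun z : EuclideanSpace ℂ (Fin m) =>
      z a * (starRingEnd ℂ) (z b)) σ := by
    intro a b
    apply Integrable.mono' (integrable_const (1 : ℝ))
    · exact (((coord_continuous a).mul ((Complex.continuous_conj).comp
        (coord_continuous b)))).aestronglyMeasurable
    · filter_upwards [hsph] with z hz
      calc ‖z a * (starRingEnd ℂ) (z b)‖ = ‖z a‖ * ‖z b‖ := by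
            rw [norm_mul, RCLike.norm_conj]
        _ ≤ 1 * 1 := by
            apply mul_le_mul _ _ (norm_nonneg _) zero_le_one <;>
              [skip; skip] <;> rw [← hz] <;> exact coord_norm_le z _
        _ = 1 := one_mul 1
  -- change of variables along a linear isometry
  have hchg : ∀ (U : EuclideanSpace ℂ (Fin m) ≃ₗᵢ[ℂ] EuclideanSpace ℂ (Fin m))
      (a b : Fin m), ∫ z, z a * (starRingEnd ℂ) (z b) ∂σ
        = ∫ z, (U z) a * (starRingEnd ℂ) ((U z) b) ∂σ := by
    intro U a b
    conv_lhs => rw [← hσ_inv U]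
    rw [integral_map U.continuous.aemeasurable]
    exact (((coord_continuous a).mul ((Complex.continuous_conj).comp
        (coord_continuous b)))).aestronglyMeasurable
  by_cases hij : i = j
  · subst hij
    simp only [if_pos rfl]
    -- all diagonal moments are equal
    have hsymm : ∀ k : Fin m, ∫ z, z k * (starRingEnd ℂ) (z k) ∂σ
        = ∫ z, z i * (starRingEnd ℂ) (z i) ∂σ := by
      intro k
      have := hchg (LinearIsometryEquiv.piLpCongrLeft 2 ℂ ℂ (Equiv.swap i k)) i i
      rw [this]
      congr 1
      funext z
      have happ : ∀ a, (LinearIsometryEquiv.piLpCongrLeft 2 ℂ ℂ (Equiv.swap i k)) z a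
          = z (Equiv.swap i k a) := by
        intro a
        rw [LinearIsometryEquiv.piLpCongrLeft_apply]
        simp [Equiv.piCongrLeft'_apply, Equiv.symm_swap]
      rw [happ, Equiv.swap_apply_left]
    -- sum of diagonal moments is 1
    have hsum : ∑ k, ∫ z, z k * (starRingEnd ℂ) (z k) ∂σ = 1 := by
      rw [← integral_finset_sum _ (fun k _ => hint k k)]
      have : ∀ᵐ z ∂σ, ∑ k, z k * (starRingEnd ℂ) (z k) = 1 := by
        filter_upwards [hsph] with z hz
        have : ∀ k, z k * (starRingEnd ℂ) (z k) = ((‖z k‖ ^ 2 : ℝ) : ℂ) := by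
          intro k
          rw [Complex.mul_conj, Complex.normSq_eq_norm_sq]
        simp_rw [this]
        rw [← Complex.ofReal_sum]
        norm_cast
        have := EuclideanSpace.norm_eq z
        rw [hz] at this
        have h2 : (1 : ℝ) ^ 2 = Real.sqrt (∑ k, ‖z k‖ ^ 2) ^ 2 := by rw [← this]
        rw [Real.sq_sqrt (Finset.sum_nonneg fun _ _ => sq_nonneg _)] at h2
        linarith
      rw [integral_congr_ae this, integral_const]
      simp
    simp_rw [hsymm] at hsum
    rw [Finset.sum_const, Finset.card_univ, Fintype.card_fin, nsmul_eq_mul] at hsum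
    have hm0 : (m : ℂ) ≠ 0 := by
      simp only [ne_eq, Nat.cast_eq_zero]
      omega
    have hI : (∫ z, z i * (starRingEnd ℂ) (z i) ∂σ) = (m : ℂ)⁻¹ :=
      eq_inv_of_mul_eq_one_left (by rw [mul_comm]; exact hsum)
    simpa using hI
  · simp only [if_neg hij]
    set c : Fin m → ℂ := fun k => if k = j then -1 else 1 with hcdef
    have hc : ∀ k, ‖c k‖ = 1 := by
      intro k
      by_cases h : k = j <;> simp [hcdef, h]
    have := hchg (diagIso c hc) i j
    have happ : ∀ (z : EuclideanSpace ℂ (Fin m)) a, (diagIso c hc) z a = c a * z a :=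
      fun _ _ => rfl
    rw [show (fun z : EuclideanSpace ℂ (Fin m) => (diagIso c hc z) i
        * (starRingEnd ℂ) ((diagIso c hc z) j))
        = fun z => -(z i * (starRingEnd ℂ) (z j)) by
      funext z
      rw [happ, happ]
      simp only [hcdef, if_neg hij, if_pos rfl, one_mul, map_neg, map_one, neg_mul, mul_neg,
        neg_one_mul, map_mul]] at this
    rw [integral_neg] at this
    linear_combination this / 2



theorem phi_const {M : Type*} [MetricSpace M] [CompactSpace M]
    [MeasurableSpace M] [BorelSpace M]
    (μ : Measure M) [IsFiniteMeasure μ]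
    (G : Subgroup (M ≃ᵢ M))
    (hGmp : ∀ g ∈ G, MeasurePreserving (g : M → M) μ μ)
    (hGtrans : ∀ x y : M, ∃ g ∈ G, g x = y)
    (m : ℕ) (e : Fin m → M → ℂ)
    (he_cont : ∀ i, Continuous (e i))
    (he_orth : ∀ i j, ∫ x, e i x * (starRingEnd ℂ) (e j x) ∂μ = if i = j then 1 else 0)
    (he_inv : ∀ g ∈ G, ∀ i, (fun x => e i (g x)) ∈ Submodule.span ℂ (Set.range e))
    (x y : M) : ∑ i, ‖e i x‖ ^ 2 = ∑ i, ‖e i y‖ ^ 2 := by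
  obtain ⟨g, hg, hgx⟩ := hGtrans x y
  subst hgx
  -- extract the coefficient matrix
  have hA : ∀ i, ∃ c : Fin m → ℂ, ∀ x, e i (g x) = ∑ j, c j * e j x := by
    intro i
    obtain ⟨c, hc⟩ := (Submodule.mem_span_range_iff_exists_fun ℂ).mp (he_inv g hg i)
    refine ⟨c, fun x => ?_⟩
    have := congrFun hc x
    simp only [Finset.sum_apply, Pi.smul_apply, smul_eq_mul] at this
    exact this.symm
  choose A hAe using hA
  -- e i ∘ g are orthonormal
  have hintkl : ∀ k l, Integrable (fun x => e k x * (starRingEnd ℂ) (e l x)) μ := by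
    intro k l
    exact ((he_cont k).mul
      (Complex.continuous_conj.comp (he_cont l))).integrable_of_hasCompactSupport
      (HasCompactSupport.of_compactSpace _)
  have horth' : ∀ i j, ∑ k, A i k * (starRingEnd ℂ) (A j k) = if i = j then 1 else 0 := by
    intro i j
    have hcomp : ∫ x, e i (g x) * (starRingEnd ℂ) (e j (g x)) ∂μ
        = ∫ x, e i x * (starRingEnd ℂ) (e j x) ∂μ :=
      (hGmp g hg).integral_comp
        ((g : M ≃ᵢ M).toHomeomorph.measurableEmbedding)
        (fun x => e i x * (starRingEnd ℂ) (e j x))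
    rw [he_orth i j] at hcomp
    rw [← hcomp]
    have hptw : ∀ x, e i (g x) * (starRingEnd ℂ) (e j (g x))
        = ∑ k, ∑ l, A i k * (starRingEnd ℂ) (A j l) * (e k x * (starRingEnd ℂ) (e l x)) := by
      intro x
      rw [hAe i, hAe j, map_sum, Finset.sum_mul_sum]
      apply Finset.sum_congr rfl; intro k _
      apply Finset.sum_congr rfl; intro l _
      rw [map_mul]
      ring
    calc ∑ k, A i k * (starRingEnd ℂ) (A j k)
        = ∑ k, ∑ l, A i k * (starRingEnd ℂ) (A j l)
            * ∫ x, e k x * (starRingEnd ℂ) (e l x) ∂μ := by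
          apply Finset.sum_congr rfl; intro k _
          rw [Finset.sum_eq_single k]
          · rw [he_orth k k, if_pos rfl, mul_one]
          · intro l _ hlk
            rw [he_orth k l, if_neg (fun h => hlk h.symm), mul_zero]
          · intro h; exact absurd (Finset.mem_univ k) h
      _ = ∫ x, ∑ k, ∑ l, A i k * (starRingEnd ℂ) (A j l)
            * (e k x * (starRingEnd ℂ) (e l x)) ∂μ := by
          rw [integral_finset_sum]
          · apply Finset.sum_congr rfl; intro k _
            rw [integral_finset_sum]
            · apply Finset.sum_congr rfl; intro l _
              rw [integral_const_mul]
            · exact fun l _ => (hintkl k l).const_mul _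
          · exact fun k _ => integrable_finset_sum _ (fun l _ => (hintkl k l).const_mul _)
      _ = ∫ x, e i (g x) * (starRingEnd ℂ) (e j (g x)) ∂μ := by
          congr 1; funext x; rw [hptw x]
  -- A is unitary hence columns orthonormal
  have hcol : ∀ j k : Fin m, ∑ i, A i j * (starRingEnd ℂ) (A i k)
      = if j = k then 1 else 0 := by
    intro j k
    set Amat : Matrix (Fin m) (Fin m) ℂ := Matrix.of A with hAm
    have h1 : Amat * Amat.conjTranspose = 1 := by
      ext a b
      rw [Matrix.mul_apply]
      simp only [Matrix.conjTranspose_apply, hAm, Matrix.of_apply, ← starRingEnd_apply]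
      rw [horth' a b]
      by_cases h : a = b <;> simp [h, Matrix.one_apply]
    have h2 : Amat.conjTranspose * Amat = 1 := mul_eq_one_comm.mp h1
    have hjk := congrFun (congrFun h2 j) k
    simp only [Matrix.mul_apply, Matrix.conjTranspose_apply, hAm, Matrix.of_apply,
      Matrix.one_apply, ← starRingEnd_apply] at hjk
    calc ∑ i, A i j * (starRingEnd ℂ) (A i k)
        = (starRingEnd ℂ) (∑ i, (starRingEnd ℂ) (A i j) * A i k) := by
          rw [map_sum]
          apply Finset.sum_congr rfl; intro i _
          rw [map_mul, Complex.conj_conj]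
      _ = if j = k then 1 else 0 := by
          rw [hjk]
          by_cases h : j = k <;> simp [h]
  -- pointwise computation
  have hC : (∑ i, (‖e i (g x)‖ ^ 2 : ℝ) : ℂ) = (∑ i, (‖e i x‖ ^ 2 : ℝ) : ℂ) := by
    push_cast
    have hnorm : ∀ (w : ℂ), ((‖w‖ ^ 2 : ℝ) : ℂ) = w * (starRingEnd ℂ) w := by
      intro w
      rw [Complex.mul_conj, Complex.normSq_eq_norm_sq]
    calc (∑ i, ((‖e i (g x)‖ : ℂ)) ^ 2)
        = ∑ i, e i (g x) * (starRingEnd ℂ) (e i (g x)) := by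
          apply Finset.sum_congr rfl; intro i _
          rw [← hnorm]; push_cast; ring
      _ = ∑ i, ∑ j, ∑ k, (A i j * (starRingEnd ℂ) (A i k)) * (e j x * (starRingEnd ℂ) (e k x)) := by
          apply Finset.sum_congr rfl; intro i _
          rw [hAe i, map_sum, Finset.sum_mul_sum]
          apply Finset.sum_congr rfl; intro j _
          apply Finset.sum_congr rfl; intro k _
          rw [map_mul]; ring
      _ = ∑ j, ∑ k, (∑ i, A i j * (starRingEnd ℂ) (A i k)) * (e j x * (starRingEnd ℂ) (e k x)) := by
          rw [Finset.sum_comm]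
          apply Finset.sum_congr rfl; intro j _
          rw [Finset.sum_comm]
          apply Finset.sum_congr rfl; intro k _
          rw [Finset.sum_mul]
      _ = ∑ j, e j x * (starRingEnd ℂ) (e j x) := by
          apply Finset.sum_congr rfl; intro j _
          rw [Finset.sum_eq_single j]
          · rw [hcol j j, if_pos rfl, one_mul]
          · intro k _ hkj
            rw [hcol j k, if_neg (fun h => hkj h.symm), zero_mul]
          · intro h; exact absurd (Finset.mem_univ j) h
      _ = ∑ i, ((‖e i x‖ : ℂ)) ^ 2 := by
          apply Finset.sum_congr rfl; intro i _
          rw [← hnorm]; push_cast; ring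
  exact_mod_cast (congrArg Complex.re hC).symm

/-- The expected local `L²`-mass of a random unit vector of an
isometry-invariant `m`-dimensional orthonormal system equals the normalized volume:
`∫_S (∫_Ω |∑ i, z i e i|² dμ) dσ(z) = μ(Ω)/μ(M)`. -/
theorem expected_local_mass {M : Type*} [MetricSpace M] [CompactSpace M]
    [MeasurableSpace M] [BorelSpace M]
    (μ : Measure M) [IsFiniteMeasure μ] (hμpos : 0 < μ Set.univ)
    (G : Subgroup (M ≃ᵢ M))
    (hGmp : ∀ g ∈ G, MeasurePreserving (g : M → M) μ μ)
    (hGtrans : ∀ x y : M, ∃ g ∈ G, g x = y)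
    (m : ℕ) (hm : 1 ≤ m) (e : Fin m → M → ℂ)
    (he_cont : ∀ i, Continuous (e i))
    (he_orth : ∀ i j, ∫ x, e i x * (starRingEnd ℂ) (e j x) ∂μ = if i = j then 1 else 0)
    (he_inv : ∀ g ∈ G, ∀ i, (fun x => e i (g x)) ∈ Submodule.span ℂ (Set.range e))
    [MeasurableSpace (EuclideanSpace ℂ (Fin m))] [BorelSpace (EuclideanSpace ℂ (Fin m))]
    (σ : Measure (EuclideanSpace ℂ (Fin m))) [IsProbabilityMeasure σ]
    (hσ_sphere : σ (Metric.sphere 0 1) = 1)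
    (hσ_inv : ∀ U : EuclideanSpace ℂ (Fin m) ≃ₗᵢ[ℂ] EuclideanSpace ℂ (Fin m),
      Measure.map U σ = σ)
    (Ω : Set M) (hΩ : MeasurableSet Ω) :
    ∫ z, (∫ x in Ω, ‖∑ i, z i * e i x‖ ^ 2 ∂μ) ∂σ = (μ Ω).toReal / (μ Set.univ).toReal := by
  have hM : Nonempty M := by
    by_contra h
    rw [not_nonempty_iff] at h
    rw [Set.univ_eq_empty_iff.mpr h, measure_empty] at hμpos
    exact lt_irrefl 0 hμpos
  obtain ⟨x₀⟩ := hM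
  have hnorm : ∀ w : ℂ, (‖w‖ : ℝ) ^ 2 = (w * (starRingEnd ℂ) w).re := by
    intro w
    rw [Complex.mul_conj, Complex.ofReal_re, Complex.normSq_eq_norm_sq]
  have hintkl : ∀ k l, Integrable (fun x => e k x * (starRingEnd ℂ) (e l x)) μ := by
    intro k l
    exact ((he_cont k).mul
      (Complex.continuous_conj.comp (he_cont l))).integrable_of_hasCompactSupport
      (HasCompactSupport.of_compactSpace _)
  set B : Fin m → Fin m → ℂ := fun i j => ∫ x in Ω, e i x * (starRingEnd ℂ) (e j x) ∂μ with hB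
  -- inner integral
  have hinner : ∀ z : EuclideanSpace ℂ (Fin m),
      ∫ x in Ω, ‖∑ i, z i * e i x‖ ^ 2 ∂μ
        = ∑ i, ∑ j, (z i * (starRingEnd ℂ) (z j) * B i j).re := by
    intro z
    have hptw : ∀ x, ‖∑ i, z i * e i x‖ ^ 2
        = ∑ i, ∑ j, (z i * (starRingEnd ℂ) (z j) * (e i x * (starRingEnd ℂ) (e j x))).re := by
      intro x
      rw [hnorm]
      have hexp : (∑ i, z i * e i x) * (starRingEnd ℂ) (∑ j, z j * e j x)
          = ∑ i, ∑ j, z i * (starRingEnd ℂ) (z j) * (e i x * (starRingEnd ℂ) (e j x)) := by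
        rw [map_sum, Finset.sum_mul_sum]
        refine Finset.sum_congr rfl fun i _ => Finset.sum_congr rfl fun j _ => ?_
        rw [map_mul]; ring
      rw [hexp, Complex.re_sum]
      exact Finset.sum_congr rfl fun i _ => by rw [Complex.re_sum]
    simp_rw [hptw]
    rw [integral_finset_sum]
    · refine Finset.sum_congr rfl fun i _ => ?_
      rw [integral_finset_sum]
      · refine Finset.sum_congr rfl fun j _ => ?_
        have hi : Integrable (fun x => z i * (starRingEnd ℂ) (z j)
            * (e i x * (starRingEnd ℂ) (e j x))) (μ.restrict Ω) :=
          ((hintkl i j).integrableOn).const_mul _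
        have := integral_re hi
        simp only [RCLike.re_to_complex] at this
        rw [this, integral_const_mul]
      · exact fun j _ => (((hintkl i j).integrableOn).const_mul _).re
    · exact fun i _ => integrable_finset_sum _
        (fun j _ => (((hintkl i j).integrableOn).const_mul _).re)
  simp_rw [hinner]
  -- outer integral
  have hsph : ∀ᵐ z ∂σ, ‖z‖ = 1 := by
    have hc : σ (Metric.sphere (0 : EuclideanSpace ℂ (Fin m)) 1)ᶜ = 0 := by
      rw [measure_compl Metric.isClosed_sphere.measurableSet (measure_ne_top _ _), hσ_sphere,
        measure_univ, tsub_self]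
    filter_upwards [measure_eq_zero_iff_ae_notMem.mp hc] with z hz
    simpa [Metric.mem_sphere, dist_zero_right] using not_not.mp hz
  have hintz : ∀ a b : Fin m, Integrable (fun z : EuclideanSpace ℂ (Fin m) =>
      z a * (starRingEnd ℂ) (z b)) σ := by
    intro a b
    apply Integrable.mono' (integrable_const (1 : ℝ))
    · exact (((coord_continuous a).mul ((Complex.continuous_conj).comp
        (coord_continuous b)))).aestronglyMeasurable
    · filter_upwards [hsph] with z hz
      calc ‖z a * (starRingEnd ℂ) (z b)‖ = ‖z a‖ * ‖z b‖ := by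
            rw [norm_mul, RCLike.norm_conj]
        _ ≤ 1 * 1 := by
            apply mul_le_mul _ _ (norm_nonneg _) zero_le_one <;>
              [skip; skip] <;> rw [← hz] <;> exact coord_norm_le z _
        _ = 1 := one_mul 1
  rw [integral_finset_sum]
  swap
  · exact fun i _ => integrable_finset_sum _
      (fun j _ => ((hintz i j).mul_const _).re)
  have houter : ∀ i : Fin m, (∫ z, ∑ j, (z i * (starRingEnd ℂ) (z j) * B i j).re ∂σ)
      = ((m : ℝ))⁻¹ * (B i i).re := by
    intro i
    have hre : ∀ j : Fin m, Integrable
        (fun z : EuclideanSpace ℂ (Fin m) => (z i * (starRingEnd ℂ) (z j) * B i j).re) σ :=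
      fun j => ((hintz i j).mul_const _).re
    rw [integral_finset_sum _ (fun j _ => hre j)]
    have hj : ∀ j : Fin m, (∫ z, (z i * (starRingEnd ℂ) (z j) * B i j).re ∂σ)
        = ((if i = j then ((m : ℂ))⁻¹ else 0) * B i j).re := by
      intro j
      have hi := (hintz i j).mul_const (B i j)
      have := integral_re hi
      simp only [RCLike.re_to_complex] at this
      rw [this, integral_mul_const, moment hm σ hσ_sphere hσ_inv i j]
    simp_rw [hj]
    rw [Finset.sum_eq_single i]
    · rw [if_pos rfl]
      have hcast : ((m : ℂ))⁻¹ = Complex.ofReal ((m : ℝ))⁻¹ := by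
        rw [Complex.ofReal_inv, Complex.ofReal_natCast]
      rw [hcast, Complex.re_ofReal_mul]
    · intro j _ hji
      rw [if_neg (fun h => hji h.symm), zero_mul, Complex.zero_re]
    · intro h; exact absurd (Finset.mem_univ i) h
  simp_rw [houter]
  rw [← Finset.mul_sum]
  -- identify ∑ (B i i).re with ∫_Ω Φ
  have hBre : ∀ i, (B i i).re = ∫ x in Ω, ‖e i x‖ ^ 2 ∂μ := by
    intro i
    have := integral_re ((hintkl i i).integrableOn (s := Ω))
    simp only [RCLike.re_to_complex] at this
    rw [hB, ← this]
    exact integral_congr_ae (Filter.Eventually.of_forall fun x => (hnorm (e i x)).symm)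
  simp_rw [hBre]
  have hintnorm : ∀ i, Integrable (fun x => ‖e i x‖ ^ 2) μ := by
    intro i
    exact (((he_cont i).norm.pow 2)).integrable_of_hasCompactSupport
      (HasCompactSupport.of_compactSpace _)
  rw [← integral_finset_sum _ (fun i _ => (hintnorm i).integrableOn)]
  -- Φ is constant
  set c : ℝ := ∑ i, ‖e i x₀‖ ^ 2 with hc
  have hΦ : ∀ x, ∑ i, ‖e i x‖ ^ 2 = c :=
    fun x => phi_const μ G hGmp hGtrans m e he_cont he_orth he_inv x x₀
  have hΩint : ∫ x in Ω, ∑ i, ‖e i x‖ ^ 2 ∂μ = c * (μ Ω).toReal := by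
    rw [integral_congr_ae (Filter.Eventually.of_forall fun x => hΦ x), integral_const]
    rw [Measure.real, Measure.restrict_apply_univ, smul_eq_mul, mul_comm]
  have htotal : c * (μ Set.univ).toReal = m := by
    have h1 : ∫ x, ∑ i, ‖e i x‖ ^ 2 ∂μ = c * (μ Set.univ).toReal := by
      rw [integral_congr_ae (Filter.Eventually.of_forall fun x => hΦ x), integral_const,
        Measure.real, smul_eq_mul, mul_comm]
    have h2 : ∫ x, ∑ i, ‖e i x‖ ^ 2 ∂μ = m := by
      rw [integral_finset_sum _ (fun i _ => hintnorm i)]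
      have : ∀ i : Fin m, ∫ x, ‖e i x‖ ^ 2 ∂μ = 1 := by
        intro i
        have := integral_re (hintkl i i)
        simp only [RCLike.re_to_complex] at this
        calc ∫ x, ‖e i x‖ ^ 2 ∂μ
            = ∫ x, (e i x * (starRingEnd ℂ) (e i x)).re ∂μ :=
              integral_congr_ae (Filter.Eventually.of_forall fun x => hnorm (e i x))
          _ = (∫ x, e i x * (starRingEnd ℂ) (e i x) ∂μ).re := this
          _ = 1 := by rw [he_orth i i, if_pos rfl, Complex.one_re]
      simp_rw [this]
      simp
    rw [← h1, h2]
  rw [hΩint]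
  have hμT : (0 : ℝ) < (μ Set.univ).toReal :=
    ENNReal.toReal_pos hμpos.ne' (measure_ne_top _ _)
  have hm0 : (m : ℝ) ≠ 0 := by positivity
  rw [eq_div_iff hμT.ne']
  calc ((m : ℝ))⁻¹ * (c * (μ Ω).toReal) * (μ Set.univ).toReal
      = (c * (μ Set.univ).toReal) * (μ Ω).toReal * ((m : ℝ))⁻¹ := by ring
    _ = (m : ℝ) * (μ Ω).toReal * ((m : ℝ))⁻¹ := by rw [htotal]
    _ = (μ Ω).toReal := by field_simp
end
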